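/- Setting α = 0, the triple integral (1/2)∭_{[0,1]³} dx dy dz / (1-x(1-y(1-z))) equals ζ(3). -/

import Mathlib

open Filter

noncomputable def Hh (n : ℕ) : ℝ := ∑ i ∈ Finset.range n, 1 / ((i : ℝ) + 1)

lemma Hh_nonneg (n : ℕ) : 0 ≤ Hh n := Finset.sum_nonneg fun i _ => by positivity

lemma Hh_succ (n : ℕ) : Hh (n + 1) = Hh n + 1 / ((n : ℝ) + 1) := Finset.sum_range_succ _ _

lemma Hh_one : Hh 1 = 1 := by simp [Hh]

/-- Partial sum identity for the telescoping series. -/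
lemma partial_eq (k N : ℕ) :
    ∑ j ∈ Finset.range N, 1 / (((j : ℝ) + 1) * ((j : ℝ) + (k : ℝ) + 2)) =
      (Hh N - Hh (N + k + 1) + Hh (k + 1)) / ((k : ℝ) + 1) := by
  induction N with
  | zero => simp [Hh]
  | succ N ih =>
      have h1 : ((N : ℝ) + 1) ≠ 0 := by positivity
      have h2 : ((N : ℝ) + (k : ℝ) + 2) ≠ 0 := by positivity
      have h3 : ((k : ℝ) + 1) ≠ 0 := by positivity
      have key : (1 : ℝ) / (((N : ℝ) + 1) * ((N : ℝ) + (k : ℝ) + 2)) =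
          (1 / ((N : ℝ) + 1) - 1 / ((N : ℝ) + (k : ℝ) + 2)) / ((k : ℝ) + 1) := by
        field_simp
        ring
      have e1 : Hh (N + 1) = Hh N + 1 / ((N : ℝ) + 1) := Hh_succ N
      have e2 : Hh (N + k + 1 + 1) = Hh (N + k + 1) + 1 / ((N : ℝ) + (k : ℝ) + 2) := by
        rw [Hh_succ]; push_cast; ring
      rw [show N + 1 + k + 1 = N + k + 1 + 1 by ring, Finset.sum_range_succ, ih, key, e1, e2]
      ring

lemma tail_small (k : ℕ) : ∀ N : ℕ, Hh (N + k + 1) - Hh N ≤ ((k : ℝ) + 1) / ((N : ℝ) + 1) := by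
  intro N
  induction k with
  | zero => rw [Hh_succ]; simp
  | succ k ih =>
      rw [show N + (k + 1) + 1 = (N + k + 1) + 1 by ring, Hh_succ]
      have : 1 / (((N + k + 1 : ℕ) : ℝ) + 1) ≤ 1 / ((N : ℝ) + 1) := by
        apply one_div_le_one_div_of_le (by positivity)
        push_cast; linarith
      have hadd : ((k:ℝ)+1)/((N:ℝ)+1) + 1/((N:ℝ)+1) = ((k:ℝ)+1+1)/((N:ℝ)+1) := by ring
      push_cast
      push_cast at ih this hadd
      linarith

lemma tail_nonneg (k N : ℕ) : 0 ≤ Hh (N + k + 1) - Hh N := by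
  induction k with
  | zero =>
      simp only [Nat.add_zero, Hh_succ]
      have : (0:ℝ) ≤ 1 / ((N:ℝ)+1) := by positivity
      linarith
  | succ k ih =>
      rw [show N + (k + 1) + 1 = (N + k + 1) + 1 by ring, Hh_succ]
      have : 0 ≤ 1 / (((N + k + 1 : ℕ):ℝ)+1) := by positivity
      linarith

/-- Telescoping series: `∑_j 1/((j+1)(j+k+2)) = H(k+1)/(k+1)`. -/
lemma tele (k : ℕ) :
    HasSum (fun j : ℕ => 1 / (((j : ℝ) + 1) * ((j : ℝ) + (k : ℝ) + 2)))
      (Hh (k + 1) / ((k : ℝ) + 1)) := by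
  rw [hasSum_iff_tendsto_nat_of_nonneg (fun i => by positivity)]
  simp only [partial_eq]
  have hd : Tendsto (fun N : ℕ => Hh (N + k + 1) - Hh N) atTop (nhds 0) := by
    apply squeeze_zero (fun N => tail_nonneg k N) (fun N => tail_small k N)
    have h := tendsto_one_div_add_atTop_nhds_zero_nat.const_mul ((k : ℝ) + 1)
    simpa [mul_one_div, mul_zero, div_eq_mul_inv] using h
  have h2 : Tendsto (fun N : ℕ => (-(Hh (N + k + 1) - Hh N) + Hh (k + 1)) / ((k : ℝ) + 1)) atTop
      (nhds ((-0 + Hh (k + 1)) / ((k : ℝ) + 1))) := (hd.neg.add_const _).div_const _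
  simp only [neg_zero, zero_add] at h2
  exact h2.congr fun N => by ring

lemma Hh_le_sqrt : ∀ n : ℕ, Hh n ≤ 2 * Real.sqrt n := by
  intro n
  induction n with
  | zero => simp [Hh]
  | succ n ih =>
      rw [Hh_succ]
      set a := Real.sqrt n with ha
      set b := Real.sqrt (n + 1) with hb
      have ha0 : 0 ≤ a := Real.sqrt_nonneg _
      have hb1 : 1 ≤ b := Real.one_le_sqrt.2 (by push_cast; linarith [Nat.cast_nonneg (α := ℝ) n])
      have ha2 : a ^ 2 = n := Real.sq_sqrt (Nat.cast_nonneg n)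
      have hb2 : b ^ 2 = (n : ℝ) + 1 := by
        rw [hb]
        rw [show ((n : ℕ) : ℝ) + 1 = (((n + 1 : ℕ) : ℕ) : ℝ) by push_cast; ring]
        exact Real.sq_sqrt (Nat.cast_nonneg _)
      have hab : a ≤ b := Real.sqrt_le_sqrt (by push_cast; linarith)
      have hbpos : (0:ℝ) < b := lt_of_lt_of_le one_pos hb1
      have key : 1 / ((n : ℝ) + 1) ≤ 2 * (b - a) := by
        rw [← hb2, div_le_iff₀ (by positivity)]
        nlinarith [mul_nonneg (sub_nonneg.2 hab) (sq_nonneg b), mul_nonneg ha0 (le_trans zero_le_one hb1)]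
      have : 2 * Real.sqrt ((n:ℕ) : ℝ) = 2 * a := by rw [ha]
      push_cast
      linarith [ih]

lemma summable_pow32 : Summable (fun m : ℕ => 2 * ((((m : ℝ) + 2)) ^ ((3:ℝ)/2))⁻¹) := by
  apply Summable.mul_left
  have h : Summable (fun n : ℕ => ((n : ℝ) ^ ((3:ℝ)/2))⁻¹) :=
    Real.summable_nat_rpow_inv.2 (by norm_num)
  have h2 := (summable_nat_add_iff 2).2 h
  apply h2.congr
  intro n
  congr 1
  push_cast
  ring_nf

lemma Hh_div_le (m : ℕ) :
    Hh (m + 1) / ((m : ℝ) + 2) ^ 2 ≤ 2 * ((((m : ℝ) + 2)) ^ ((3:ℝ)/2))⁻¹ := by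
  set x : ℝ := (m : ℝ) + 2 with hx
  have hx0 : (0:ℝ) < x := by positivity
  have hsq : Real.sqrt x * Real.sqrt x = x := Real.mul_self_sqrt hx0.le
  have hsqpos : 0 < Real.sqrt x := Real.sqrt_pos.2 hx0
  have h1 : Hh (m + 1) ≤ 2 * Real.sqrt x := by
    refine le_trans (Hh_le_sqrt (m+1)) ?_
    have : ((m + 1 : ℕ) : ℝ) ≤ x := by push_cast; linarith
    exact mul_le_mul_of_nonneg_left (Real.sqrt_le_sqrt this) (by norm_num)
  have hrpow : x ^ ((3:ℝ)/2) = x * Real.sqrt x := by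
    rw [show (3:ℝ)/2 = 1 + 1/2 by norm_num, Real.rpow_add hx0, Real.rpow_one,
      Real.sqrt_eq_rpow]
  have h2 : 2 * Real.sqrt x / x ^ 2 = 2 * (x ^ ((3:ℝ)/2))⁻¹ := by
    rw [hrpow]
    field_simp
    nlinarith [hsq]
  calc Hh (m + 1) / x ^ 2 ≤ 2 * Real.sqrt x / x ^ 2 := by
        apply div_le_div_of_nonneg_right h1 (by positivity) |>.trans_eq rfl
      _ = 2 * (x ^ ((3:ℝ)/2))⁻¹ := h2

lemma sum1 (k : ℕ) :
    (∑' j : ℕ, ENNReal.ofReal (1 / (((j : ℝ) + 1) * ((j : ℝ) + (k : ℝ) + 2)))) =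
      ENNReal.ofReal (Hh (k + 1) / ((k : ℝ) + 1)) := by
  rw [← ENNReal.ofReal_tsum_of_nonneg (fun j => by positivity) (tele k).summable,
    (tele k).tsum_eq]

lemma T_eq_S :
    (∑' p : ℕ × ℕ, ENNReal.ofReal
        (1 / (((p.1 : ℝ) + 1) * ((p.2 : ℝ) + 1) * ((p.1 : ℝ) + (p.2 : ℝ) + 2)))) =
      ∑' k : ℕ, ENNReal.ofReal (Hh (k + 1) / ((k : ℝ) + 1) ^ 2) := by
  rw [ENNReal.tsum_prod', ENNReal.tsum_comm]
  apply tsum_congr; intro k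
  have hpt : ∀ j : ℕ, ENNReal.ofReal
      (1 / (((j : ℝ) + 1) * ((k : ℝ) + 1) * ((j : ℝ) + (k : ℝ) + 2))) =
      ENNReal.ofReal (1 / ((k : ℝ) + 1)) *
        ENNReal.ofReal (1 / (((j : ℝ) + 1) * ((j : ℝ) + (k : ℝ) + 2))) := by
    intro j
    rw [← ENNReal.ofReal_mul (by positivity)]
    congr 1
    field_simp
  rw [tsum_congr hpt, ENNReal.tsum_mul_left, sum1 k, ← ENNReal.ofReal_mul (by positivity)]
  congr 1
  rw [div_mul_div_comm, one_mul, ← sq]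

lemma T_eq_twoT1 :
    (∑' p : ℕ × ℕ, ENNReal.ofReal
        (1 / (((p.1 : ℝ) + 1) * ((p.2 : ℝ) + 1) * ((p.1 : ℝ) + (p.2 : ℝ) + 2)))) =
      2 * ∑' p : ℕ × ℕ, ENNReal.ofReal
        (1 / (((p.1 : ℝ) + 1) * ((p.1 : ℝ) + (p.2 : ℝ) + 2) ^ 2)) := by
  have hpt : ∀ p : ℕ × ℕ, ENNReal.ofReal
      (1 / (((p.1 : ℝ) + 1) * ((p.2 : ℝ) + 1) * ((p.1 : ℝ) + (p.2 : ℝ) + 2))) =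
      ENNReal.ofReal (1 / (((p.1 : ℝ) + 1) * ((p.1 : ℝ) + (p.2 : ℝ) + 2) ^ 2)) +
        ENNReal.ofReal (1 / (((p.2 : ℝ) + 1) * ((p.1 : ℝ) + (p.2 : ℝ) + 2) ^ 2)) := by
    rintro ⟨j, k⟩
    rw [← ENNReal.ofReal_add (by positivity) (by positivity)]
    congr 1
    have h1 : ((j : ℝ) + 1) > 0 := by positivity
    have h2 : ((k : ℝ) + 1) > 0 := by positivity
    have h3 : ((j : ℝ) + (k : ℝ) + 2) > 0 := by positivity
    field_simp
    ring
  rw [tsum_congr hpt, ENNReal.tsum_add, two_mul]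
  congr 1
  have hswap := (Equiv.prodComm ℕ ℕ).tsum_eq
    (f := fun p : ℕ × ℕ => ENNReal.ofReal (1 / (((p.1 : ℝ) + 1) * ((p.1 : ℝ) + (p.2 : ℝ) + 2) ^ 2)))
  rw [← hswap]
  apply tsum_congr
  rintro ⟨a, b⟩
  simp only [Equiv.prodComm_apply, Prod.swap_prod_mk]
  rw [add_comm (a : ℝ) (b : ℝ)]

lemma T1_eq :
    (∑' p : ℕ × ℕ, ENNReal.ofReal
        (1 / (((p.1 : ℝ) + 1) * ((p.1 : ℝ) + (p.2 : ℝ) + 2) ^ 2))) =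
      ∑' m : ℕ, ENNReal.ofReal (Hh (m + 1) / ((m : ℝ) + 2) ^ 2) := by
  rw [ENNReal.tsum_prod']
  have hj : ∀ j : ℕ,
      (∑' k : ℕ, ENNReal.ofReal (1 / (((j : ℝ) + 1) * ((j : ℝ) + (k : ℝ) + 2) ^ 2))) =
      ∑' m : ℕ, (if j ≤ m then
        ENNReal.ofReal (1 / (((j : ℝ) + 1) * ((m : ℝ) + 2) ^ 2)) else 0) := by
    intro j
    rw [← Function.Injective.tsum_eq (g := fun k : ℕ => j + k) (add_right_injective j)
      (f := fun m : ℕ => if j ≤ m then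
        ENNReal.ofReal (1 / (((j : ℝ) + 1) * ((m : ℝ) + 2) ^ 2)) else 0) ?_]
    · apply tsum_congr; intro k
      rw [if_pos (Nat.le_add_right j k)]
      congr 3
      push_cast
      ring
    · intro m hm
      rcases le_or_gt j m with h | h
      · exact ⟨m - j, show j + (m - j) = m by omega⟩
      · exfalso
        apply hm
        simp [Nat.not_le.2 h]
  rw [tsum_congr hj, ENNReal.tsum_comm]
  apply tsum_congr; intro m
  rw [tsum_eq_sum (s := Finset.range (m + 1)) (fun j hj' => by
    rw [if_neg]
    intro h
    exact hj' (Finset.mem_range.2 (by omega)))]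
  rw [Finset.sum_congr rfl (fun j hj' =>
    if_pos (Nat.lt_succ_iff.mp (Finset.mem_range.mp hj')))]
  rw [← ENNReal.ofReal_sum_of_nonneg (fun j _ => by positivity)]
  congr 1
  rw [Hh, Finset.sum_div]
  apply Finset.sum_congr rfl
  intro j _
  rw [div_div]

lemma euler_sum :
    (∑' k : ℕ, ENNReal.ofReal (Hh (k + 1) / ((k : ℝ) + 1) ^ 2)) =
      2 * ∑' n : ℕ, ENNReal.ofReal (1 / ((n : ℝ) + 1) ^ 3) := by
  set V := ∑' m : ℕ, ENNReal.ofReal (Hh (m + 1) / ((m : ℝ) + 2) ^ 2) with hVdef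
  set W := ∑' m : ℕ, ENNReal.ofReal (1 / ((m : ℝ) + 2) ^ 3) with hWdef
  have hV_ne : V ≠ ⊤ := by
    have hle : V ≤ ∑' m : ℕ, ENNReal.ofReal (2 * ((((m : ℝ) + 2)) ^ ((3:ℝ)/2))⁻¹) :=
      ENNReal.tsum_le_tsum fun m => ENNReal.ofReal_le_ofReal (Hh_div_le m)
    rw [← ENNReal.ofReal_tsum_of_nonneg (fun m => by positivity) summable_pow32] at hle
    exact ne_of_lt (lt_of_le_of_lt hle ENNReal.ofReal_lt_top)
  have hcast : ∀ m : ℕ, (((m + 1 : ℕ)) : ℝ) + 1 = (m : ℝ) + 2 := by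
    intro m; push_cast; ring
  have hS_shift : (∑' k : ℕ, ENNReal.ofReal (Hh (k + 1) / ((k : ℝ) + 1) ^ 2)) =
      1 + ∑' m : ℕ, ENNReal.ofReal (Hh (m + 2) / ((m : ℝ) + 2) ^ 2) := by
    rw [tsum_eq_zero_add' ENNReal.summable]
    congr 1
    · simp [Hh_one]
    · apply tsum_congr; intro m
      rw [hcast m]
  have hU : (∑' m : ℕ, ENNReal.ofReal (Hh (m + 2) / ((m : ℝ) + 2) ^ 2)) = V + W := by
    rw [← ENNReal.tsum_add]
    apply tsum_congr; intro m
    rw [← ENNReal.ofReal_add (div_nonneg (Hh_nonneg _) (by positivity)) (by positivity)]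
    congr 1
    have h2 : Hh (m + 2) = Hh (m + 1) + 1 / ((m : ℝ) + 2) := by
      rw [Hh_succ, hcast m]
    rw [h2]
    have h3 : ((m : ℝ) + 2) > 0 := by positivity
    field_simp
  have hZ : (∑' n : ℕ, ENNReal.ofReal (1 / ((n : ℝ) + 1) ^ 3)) = 1 + W := by
    rw [tsum_eq_zero_add' ENNReal.summable]
    congr 1
    · norm_num
    · apply tsum_congr; intro m
      rw [hcast m]
  have hSV : (∑' k : ℕ, ENNReal.ofReal (Hh (k + 1) / ((k : ℝ) + 1) ^ 2)) = 2 * V := by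
    rw [← T_eq_S, T_eq_twoT1, T1_eq]
  have hmain : V + (1 + W) = V + V := by
    calc V + (1 + W) = 1 + (V + W) := by ring
    _ = 2 * V := by rw [← hU, ← hS_shift, hSV]
    _ = V + V := two_mul V
  have hVW : 1 + W = V := (ENNReal.add_right_inj hV_ne).mp hmain
  rw [hSV, hZ, hVW]

open MeasureTheory

lemma integrableOn_I01 {f : ℝ → ℝ} (hf : Continuous f) :
    IntegrableOn f (Set.Ioo (0:ℝ) 1) :=
  (hf.continuousOn.integrableOn_compact isCompact_Icc).mono_set Set.Ioo_subset_Icc_self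

lemma int_pow_I01 (n : ℕ) : ∫ x in Set.Ioo (0:ℝ) 1, x ^ n = 1 / ((n : ℝ) + 1) := by
  rw [← integral_Ioc_eq_integral_Ioo, ← intervalIntegral.integral_of_le zero_le_one,
    integral_pow]
  norm_num

lemma int_one_sub_pow (k : ℕ) :
    ∫ y in Set.Ioo (0:ℝ) 1, (1 - y) ^ k = 1 / ((k : ℝ) + 1) := by
  rw [← integral_Ioc_eq_integral_Ioo, ← intervalIntegral.integral_of_le zero_le_one]
  have h : ∀ y ∈ Set.uIcc (0:ℝ) 1,
      HasDerivAt (fun y : ℝ => -(1 - y) ^ (k+1) / ((k:ℝ)+1)) ((1 - y) ^ k) y := by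
    intro y _
    have h1 : HasDerivAt (fun y : ℝ => 1 - y) (-1) y := by
      simpa using (hasDerivAt_id y).const_sub 1
    have h2 := (h1.pow (k+1)).neg.div_const ((k:ℝ)+1)
    refine h2.congr_deriv ?_
    simp only [Nat.add_sub_cancel]
    have hk : ((k:ℝ)+1) ≠ 0 := by positivity
    push_cast
    field_simp
  rw [intervalIntegral.integral_eq_sub_of_hasDerivAt h
    (Continuous.intervalIntegrable (by fun_prop) 0 1)]
  norm_num
  ring

lemma inner_z (n : ℕ) {y : ℝ} (hy : y ∈ Set.Ioo (0:ℝ) 1) :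
    ∫ z in Set.Ioo (0:ℝ) 1, (1 - y * (1 - z)) ^ n =
      (1 - (1 - y) ^ (n + 1)) / (((n : ℝ) + 1) * y) := by
  obtain ⟨hy0, hy1⟩ := hy
  rw [← integral_Ioc_eq_integral_Ioo, ← intervalIntegral.integral_of_le zero_le_one]
  have h : ∀ z ∈ Set.uIcc (0:ℝ) 1,
      HasDerivAt (fun z : ℝ => (1 - y + y * z) ^ (n+1) / (((n:ℝ)+1) * y))
        ((1 - y * (1 - z)) ^ n) z := by
    intro z _
    have h1 : HasDerivAt (fun z : ℝ => 1 - y + y * z) y z := by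
      simpa using ((hasDerivAt_id z).const_mul y).const_add (1 - y)
    have h2 := (h1.pow (n+1)).div_const (((n:ℝ)+1) * y)
    refine h2.congr_deriv ?_
    simp only [Nat.add_sub_cancel]
    have hk : ((n:ℝ)+1) ≠ 0 := by positivity
    have hy' : y ≠ 0 := ne_of_gt hy0
    push_cast
    field_simp
    ring
  rw [intervalIntegral.integral_eq_sub_of_hasDerivAt h
    (Continuous.intervalIntegrable (by fun_prop) 0 1)]
  rw [show (1:ℝ) - y + y * 1 = 1 by ring, show (1:ℝ) - y + y * 0 = 1 - y by ring,
    one_pow, ← sub_div]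

lemma outer_y (n : ℕ) :
    ∫ y in Set.Ioo (0:ℝ) 1, (1 - (1 - y) ^ (n + 1)) / (((n : ℝ) + 1) * y) =
      Hh (n + 1) / ((n : ℝ) + 1) := by
  rw [setIntegral_congr_fun (g := fun y : ℝ =>
      (1 / ((n:ℝ)+1)) * ∑ k ∈ Finset.range (n+1), (1 - y) ^ k) measurableSet_Ioo ?_]
  · rw [integral_const_mul, integral_finset_sum _ (fun k _ => integrableOn_I01 (by fun_prop)),
      Finset.sum_congr rfl (fun k _ => int_one_sub_pow k)]
    rw [Hh, one_div, inv_mul_eq_div]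
  · intro y hy
    obtain ⟨hy0, hy1⟩ := hy
    dsimp only
    have hy' : y ≠ 0 := ne_of_gt hy0
    have hne : (1 : ℝ) - y ≠ 1 := by intro h; apply hy'; linarith
    rw [geom_sum_eq hne (n+1)]
    have hk : ((n:ℝ)+1) ≠ 0 := by positivity
    field_simp
    ring

lemma restrict_sq : (volume : Measure (ℝ × ℝ)).restrict
      (Set.Ioo (0:ℝ) 1 ×ˢ Set.Ioo (0:ℝ) 1) =
    (volume.restrict (Set.Ioo (0:ℝ) 1)).prod (volume.restrict (Set.Ioo (0:ℝ) 1)) := by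
  rw [Measure.prod_restrict, ← Measure.volume_eq_prod]

lemma restrict_cube : (volume : Measure (ℝ × ℝ × ℝ)).restrict
      (Set.Ioo (0:ℝ) 1 ×ˢ Set.Ioo (0:ℝ) 1 ×ˢ Set.Ioo (0:ℝ) 1) =
    (volume.restrict (Set.Ioo (0:ℝ) 1)).prod
      ((volume.restrict (Set.Ioo (0:ℝ) 1)).prod (volume.restrict (Set.Ioo (0:ℝ) 1))) := by
  rw [← restrict_sq, Measure.prod_restrict, ← Measure.volume_eq_prod]

lemma sq_int (n : ℕ) :
    (∫ q, ((1 - q.1 * (1 - q.2)) ^ n)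
        ∂((volume.restrict (Set.Ioo (0:ℝ) 1)).prod (volume.restrict (Set.Ioo (0:ℝ) 1)))) =
      Hh (n + 1) / ((n : ℝ) + 1) := by
  have hint : Integrable (fun q : ℝ × ℝ => (1 - q.1 * (1 - q.2)) ^ n)
      ((volume.restrict (Set.Ioo (0:ℝ) 1)).prod (volume.restrict (Set.Ioo (0:ℝ) 1))) := by
    rw [← restrict_sq]
    exact ((Continuous.continuousOn (by fun_prop)).integrableOn_compact
      (isCompact_Icc.prod isCompact_Icc)).mono_set
      (Set.prod_mono Set.Ioo_subset_Icc_self Set.Ioo_subset_Icc_self)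
  rw [integral_prod _ hint]
  rw [setIntegral_congr_fun measurableSet_Ioo (fun y hy => inner_z n hy)]
  exact outer_y n

lemma sq_nonneg_ae (n : ℕ) : 0 ≤ᵐ[(volume.restrict (Set.Ioo (0:ℝ) 1)).prod
      (volume.restrict (Set.Ioo (0:ℝ) 1))]
    fun q : ℝ × ℝ => (1 - q.1 * (1 - q.2)) ^ n := by
  rw [← restrict_sq]
  apply ae_restrict_of_forall_mem (measurableSet_Ioo.prod measurableSet_Ioo)
  intro q hq
  simp only [Set.mem_prod, Set.mem_Ioo] at hq
  obtain ⟨⟨h1, h2⟩, h3, h4⟩ := hq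
  have : q.1 * (1 - q.2) < 1 := by nlinarith
  exact pow_nonneg (by linarith) n

lemma lint_sq (n : ℕ) :
    (∫⁻ q, ENNReal.ofReal ((1 - q.1 * (1 - q.2)) ^ n)
        ∂((volume.restrict (Set.Ioo (0:ℝ) 1)).prod (volume.restrict (Set.Ioo (0:ℝ) 1)))) =
      ENNReal.ofReal (Hh (n + 1) / ((n : ℝ) + 1)) := by
  rw [← ofReal_integral_eq_lintegral_ofReal ?_ (sq_nonneg_ae n), sq_int]
  rw [← restrict_sq]
  exact ((Continuous.continuousOn (by fun_prop)).integrableOn_compact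
    (isCompact_Icc.prod isCompact_Icc)).mono_set
    (Set.prod_mono Set.Ioo_subset_Icc_self Set.Ioo_subset_Icc_self)

lemma lint_x (n : ℕ) :
    (∫⁻ x, ENNReal.ofReal (x ^ n) ∂(volume.restrict (Set.Ioo (0:ℝ) 1))) =
      ENNReal.ofReal (1 / ((n:ℝ)+1)) := by
  rw [← ofReal_integral_eq_lintegral_ofReal (integrableOn_I01 (by fun_prop))
    (ae_restrict_of_forall_mem measurableSet_Ioo (fun x hx => pow_nonneg (le_of_lt hx.1) n)),
    int_pow_I01]

lemma geom_pt (p : ℝ × ℝ × ℝ)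
    (hp : p ∈ Set.Ioo (0:ℝ) 1 ×ˢ Set.Ioo (0:ℝ) 1 ×ˢ Set.Ioo (0:ℝ) 1) :
    ENNReal.ofReal (1 / (1 - p.1 * (1 - p.2.1 * (1 - p.2.2)))) =
      ∑' n : ℕ, ENNReal.ofReal (p.1 ^ n) *
        ENNReal.ofReal ((1 - p.2.1 * (1 - p.2.2)) ^ n) := by
  simp only [Set.mem_prod, Set.mem_Ioo] at hp
  obtain ⟨⟨hx0, hx1⟩, ⟨hy0, hy1⟩, hz0, hz1⟩ := hp
  have hu0 : 0 < 1 - p.2.1 * (1 - p.2.2) := by nlinarith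
  have hu1 : 1 - p.2.1 * (1 - p.2.2) < 1 := by nlinarith
  have hr0 : 0 ≤ p.1 * (1 - p.2.1 * (1 - p.2.2)) := by positivity
  have hr1 : p.1 * (1 - p.2.1 * (1 - p.2.2)) < 1 := by nlinarith
  rw [show (1:ℝ) - p.1 * (1 - p.2.1 * (1 - p.2.2)) =
    1 - p.1 * (1 - p.2.1 * (1 - p.2.2)) from rfl, one_div,
    ← tsum_geometric_of_lt_one hr0 hr1,
    ENNReal.ofReal_tsum_of_nonneg (fun n => pow_nonneg hr0 n)
      (summable_geometric_of_lt_one hr0 hr1)]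
  apply tsum_congr; intro n
  rw [mul_pow, ENNReal.ofReal_mul (pow_nonneg (le_of_lt hx0) n)]

lemma lint_cube :
    (∫⁻ p in Set.Ioo (0:ℝ) 1 ×ˢ Set.Ioo (0:ℝ) 1 ×ˢ Set.Ioo (0:ℝ) 1,
      ENNReal.ofReal (1 / (1 - p.1 * (1 - p.2.1 * (1 - p.2.2))))) =
      ∑' n : ℕ, ENNReal.ofReal (Hh (n + 1) / ((n : ℝ) + 1) ^ 2) := by
  have hcube : MeasurableSet (Set.Ioo (0:ℝ) 1 ×ˢ Set.Ioo (0:ℝ) 1 ×ˢ Set.Ioo (0:ℝ) 1) :=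
    measurableSet_Ioo.prod (measurableSet_Ioo.prod measurableSet_Ioo)
  rw [setLIntegral_congr_fun hcube geom_pt]
  rw [restrict_cube]
  rw [lintegral_tsum (fun n => (Measurable.aemeasurable (by fun_prop)))]
  apply tsum_congr; intro n
  have hmeasg : Measurable (fun q : ℝ × ℝ => ENNReal.ofReal ((1 - q.1 * (1 - q.2)) ^ n)) := by
    fun_prop
  rw [lintegral_prod _ (Measurable.aemeasurable (by fun_prop))]
  have inner : ∀ x : ℝ,
      (∫⁻ q, ENNReal.ofReal (x ^ n) * ENNReal.ofReal ((1 - q.1 * (1 - q.2)) ^ n)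
        ∂((volume.restrict (Set.Ioo (0:ℝ) 1)).prod (volume.restrict (Set.Ioo (0:ℝ) 1)))) =
      ENNReal.ofReal (x ^ n) * ENNReal.ofReal (Hh (n+1) / ((n:ℝ)+1)) := by
    intro x
    rw [lintegral_const_mul _ hmeasg, lint_sq n]
  rw [lintegral_congr inner]
  rw [lintegral_mul_const _ (by fun_prop), lint_x n, ← ENNReal.ofReal_mul (by positivity)]
  congr 1
  rw [div_mul_div_comm, one_mul, ← sq]

open MeasureTheory in
/-- `(1/2)∭_{(0,1)³} dx dy dz/(1-x(1-y(1-z))) = ζ(3)`. -/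
theorem stmt9 :
    (1 / 2) * (∫ p in Set.Ioo (0 : ℝ) 1 ×ˢ Set.Ioo (0 : ℝ) 1 ×ˢ Set.Ioo (0 : ℝ) 1,
        1 / (1 - p.1 * (1 - p.2.1 * (1 - p.2.2)))) =
      ∑' ν : ℕ, 1 / (((ν : ℝ) + 1)) ^ 3 := by
  have hcube : MeasurableSet (Set.Ioo (0:ℝ) 1 ×ˢ Set.Ioo (0:ℝ) 1 ×ˢ Set.Ioo (0:ℝ) 1) :=
    measurableSet_Ioo.prod (measurableSet_Ioo.prod measurableSet_Ioo)
  have hnn : 0 ≤ᵐ[volume.restrict (Set.Ioo (0:ℝ) 1 ×ˢ Set.Ioo (0:ℝ) 1 ×ˢ Set.Ioo (0:ℝ) 1)]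
      fun p : ℝ × ℝ × ℝ => 1 / (1 - p.1 * (1 - p.2.1 * (1 - p.2.2))) := by
    apply ae_restrict_of_forall_mem hcube
    intro p hp
    simp only [Set.mem_prod, Set.mem_Ioo] at hp
    obtain ⟨⟨hx0, hx1⟩, ⟨hy0, hy1⟩, hz0, hz1⟩ := hp
    have h6 : p.2.1 * (1 - p.2.2) < 1 := by nlinarith
    have hu0 : (0:ℝ) < 1 - p.2.1 * (1 - p.2.2) := by linarith
    have hu1 : p.1 * (1 - p.2.1 * (1 - p.2.2)) < 1 := by
      nlinarith [mul_pos (sub_pos.2 hx1) hu0]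
    have hpos : (0:ℝ) < 1 - p.1 * (1 - p.2.1 * (1 - p.2.2)) := by linarith
    positivity
  rw [integral_eq_lintegral_of_nonneg_ae hnn (Measurable.aestronglyMeasurable (by fun_prop))]
  rw [lint_cube, euler_sum]
  have hsum : Summable (fun n : ℕ => 1 / ((n:ℝ)+1) ^ 3) := by
    have h1 := Real.summable_one_div_nat_pow.2 (show 1 < 3 by norm_num)
    have h2 := (summable_nat_add_iff 1).2 h1
    apply h2.congr
    intro n
    push_cast
    ring
  rw [← ENNReal.ofReal_tsum_of_nonneg (fun n => by positivity) hsum,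
    ENNReal.toReal_mul, ENNReal.toReal_ofReal (tsum_nonneg (fun n => by positivity)),
    ENNReal.toReal_ofNat]
  ring
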